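/- Fix finite sets X_f, Y_f, X_g, Y_g, finite output sets Z_f, Z_g, sets S_f ⊆ X_f × Y_f and S_g ⊆ X_g × Y_g, functions f : S_f → Z_f and g : S_g → Z_g, and ε ∈ [0,1]. Suppose there are maps u_A, v_A : X_g → X_f, u_B, v_B : Y_g → Y_f and c : Z_f × Z_f → Z_g such that for every (x,y) ∈ S_g, both (u_A(x), u_B(y)) and (v_A(x), v_B(y)) lie in S_f and c(f(u_A(x), u_B(y)), f(v_A(x), v_B(y))) = g(x,y). Then for every family w of nonnegative reals that is (ε/2)-feasible for the relaxed partition bound of f, the family w'' defined by w''_{R'',z} := ∑ w_{R₁,z₁}·w_{R₂,z₂}, the sum over all pairs ((R₁,z₁),(R₂,z₂)) with c(z₁,z₂) = z and {(x,y) : (u_A(x),u_B(y)) ∈ R₁ and (v_A(x),v_B(y)) ∈ R₂} = R'', is ε-feasible for the relaxed partition bound of g and satisfies ∑_{R'',z} w''_{R'',z} = (∑_{R,z} w_{R,z})². Consequently bprt_ε(g) ≤ (bprt_{ε/2}(f))². -/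

import Mathlib

open Finset

/-- Membership of an input pair in a rectangle (encoded as a pair of finsets). -/
def MemRect {X Y : Type*} (p : X × Y) (R : Finset X × Finset Y) : Prop :=
  p.1 ∈ R.1 ∧ p.2 ∈ R.2

instance {X Y : Type*} [DecidableEq X] [DecidableEq Y] (p : X × Y) (R : Finset X × Finset Y) :
    Decidable (MemRect p R) := by unfold MemRect; infer_instance

/-- `∑_{R ∋ p} w_{R,z}`. -/
noncomputable def coverSum {X Y Z : Type*} [Fintype X] [Fintype Y]
    [DecidableEq X] [DecidableEq Y]
    (w : Finset X × Finset Y → Z → ℝ) (p : X × Y) (z : Z) : ℝ :=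
  ∑ R ∈ univ.filter (fun R => MemRect p R), w R z

/-- A family `w` is `ε`-feasible for the relaxed partition bound of `f` (valid inputs `S`). -/
def RelaxedFeasible {X Y Z : Type*} [Fintype X] [Fintype Y] [Fintype Z]
    [DecidableEq X] [DecidableEq Y]
    (S : Finset (X × Y)) (f : X × Y → Z) (ε : ℝ)
    (w : Finset X × Finset Y → Z → ℝ) : Prop :=
  (∀ R z, 0 ≤ w R z) ∧
  (∀ p ∈ S, 1 - ε ≤ coverSum w p (f p)) ∧
  (∀ p ∉ S, 1 - ε ≤ ∑ z, coverSum w p z) ∧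
  (∀ p : X × Y, ∑ z, coverSum w p z ≤ 1)

/-- The objective value `∑_{R,z} w_{R,z}`. -/
noncomputable def totalWeight {X Y Z : Type*} [Fintype X] [Fintype Y] [Fintype Z]
    [DecidableEq X] [DecidableEq Y]
    (w : Finset X × Finset Y → Z → ℝ) : ℝ :=
  ∑ R : Finset X × Finset Y, ∑ z : Z, w R z

/-- The relaxed partition bound `bprt_ε(f)`. -/
noncomputable def bprt {X Y Z : Type*} [Fintype X] [Fintype Y] [Fintype Z]
    [DecidableEq X] [DecidableEq Y]
    (S : Finset (X × Y)) (f : X × Y → Z) (ε : ℝ) : ℝ :=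
  sInf {v : ℝ | ∃ w : Finset X × Finset Y → Z → ℝ,
    RelaxedFeasible S f ε w ∧ v = totalWeight w}

/- ### auxiliary lemmas -/

set_option linter.unusedSectionVars false

lemma ite_sum_zero {α : Type*} {P : Prop} [Decidable P] (s : Finset α) (f : α → ℝ) :
    (if P then ∑ x ∈ s, f x else 0) = ∑ x ∈ s, if P then f x else 0 := by
  split_ifs <;> simp

lemma coverSum_eq {X Y Z : Type*} [Fintype X] [Fintype Y] [DecidableEq X] [DecidableEq Y]
    (w : Finset X × Finset Y → Z → ℝ) (p : X × Y) (z : Z) :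
    coverSum w p z = ∑ R : Finset X × Finset Y, if MemRect p R then w R z else 0 := by
  rw [coverSum, Finset.sum_filter]

lemma coverSum_nonneg {X Y Z : Type*} [Fintype X] [Fintype Y] [DecidableEq X] [DecidableEq Y]
    {w : Finset X × Finset Y → Z → ℝ} (hw : ∀ R z, 0 ≤ w R z) (p : X × Y) (z : Z) :
    0 ≤ coverSum w p z :=
  Finset.sum_nonneg fun R _ => hw R z

lemma totalWeight_nonneg {X Y Z : Type*} [Fintype X] [Fintype Y] [Fintype Z]
    [DecidableEq X] [DecidableEq Y]
    {w : Finset X × Finset Y → Z → ℝ} (hw : ∀ R z, 0 ≤ w R z) :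
    0 ≤ totalWeight w :=
  Finset.sum_nonneg fun R _ => Finset.sum_nonneg fun z _ => hw R z

lemma exists_feasible {X Y Z : Type*} [Fintype X] [Fintype Y] [Fintype Z]
    [DecidableEq X] [DecidableEq Y]
    (S : Finset (X × Y)) (f : X × Y → Z) {ε : ℝ} (hε : 0 ≤ ε) :
    ∃ w : Finset X × Finset Y → Z → ℝ, RelaxedFeasible S f ε w := by
  classical
  set w : Finset X × Finset Y → Z → ℝ :=
    fun R zz => ∑ p : X × Y, if R = ({p.1}, {p.2}) ∧ zz = f p then 1 else 0 with hwdef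
  have key : ∀ (q : X × Y) (zz : Z), coverSum w q zz = if zz = f q then 1 else 0 := by
    intro q zz
    rw [coverSum_eq]
    simp only [hwdef, _root_.ite_sum_zero, ← ite_and]
    rw [Finset.sum_comm]
    have step : ∀ p : X × Y,
        (∑ R : Finset X × Finset Y,
          if MemRect q R ∧ R = ({p.1}, {p.2}) ∧ zz = f p then (1:ℝ) else 0)
        = if (q = p) ∧ zz = f p then 1 else 0 := by
      intro p
      rw [Finset.sum_eq_single_of_mem (({p.1}, {p.2}) : Finset X × Finset Y) (mem_univ _)
        (by intro x _ hx; simp [hx])]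
      refine if_congr ?_ rfl rfl
      constructor
      · rintro ⟨⟨h1, h2⟩, -, h3⟩
        simp only [Finset.mem_singleton] at h1 h2
        exact ⟨Prod.ext h1 h2, h3⟩
      · rintro ⟨rfl, h3⟩
        exact ⟨⟨Finset.mem_singleton_self _, Finset.mem_singleton_self _⟩, rfl, h3⟩
    simp only [step]
    rw [Finset.sum_eq_single_of_mem q (mem_univ _)
      (by intro x _ hx; simp [Ne.symm hx])]
    simp
  have hone : ∀ q : X × Y, ∑ zz : Z, coverSum w q zz = 1 := by
    intro q
    simp only [key]
    rw [Finset.sum_ite_eq' univ (f q) (fun _ => (1:ℝ))]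
    simp
  refine ⟨w, ?_, ?_, ?_, ?_⟩
  · intro R z
    refine Finset.sum_nonneg fun p _ => ?_
    split_ifs <;> norm_num
  · intro p _
    rw [key]
    simp
    linarith
  · intro p _
    rw [hone]; linarith
  · intro p
    rw [hone]

section
variable {Xf Yf Zf Xg Yg Zg : Type*}
    [Fintype Xf] [Fintype Yf] [Fintype Zf] [Fintype Xg] [Fintype Yg] [Fintype Zg]
    [DecidableEq Xf] [DecidableEq Yf] [DecidableEq Xg] [DecidableEq Yg] [DecidableEq Zg]

lemma coverSum_sq
    (uA vA : Xg → Xf) (uB vB : Yg → Yf) (c : Zf × Zf → Zg)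
    (w : Finset Xf × Finset Yf → Zf → ℝ)
    (w'' : Finset Xg × Finset Yg → Zg → ℝ)
    (hw'' : ∀ (R'' : Finset Xg × Finset Yg) (z : Zg), w'' R'' z =
      ∑ R₁ : Finset Xf × Finset Yf, ∑ z₁ : Zf, ∑ R₂ : Finset Xf × Finset Yf, ∑ z₂ : Zf,
        if c (z₁, z₂) = z ∧
            (univ.filter (fun x : Xg => uA x ∈ R₁.1 ∧ vA x ∈ R₂.1),
             univ.filter (fun y : Yg => uB y ∈ R₁.2 ∧ vB y ∈ R₂.2)) = R''
        then w R₁ z₁ * w R₂ z₂ else 0)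
    (p : Xg × Yg) (z : Zg) :
    coverSum w'' p z = ∑ z₁, ∑ z₂, if c (z₁, z₂) = z then
      coverSum w (uA p.1, uB p.2) z₁ * coverSum w (vA p.1, vB p.2) z₂ else 0 := by
  have E : coverSum w'' p z =
      ∑ R₁ : Finset Xf × Finset Yf, ∑ z₁ : Zf, ∑ R₂ : Finset Xf × Finset Yf, ∑ z₂ : Zf,
        if c (z₁, z₂) = z ∧ MemRect (uA p.1, uB p.2) R₁ ∧ MemRect (vA p.1, vB p.2) R₂
        then w R₁ z₁ * w R₂ z₂ else 0 := by
    rw [coverSum_eq]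
    simp only [hw'', _root_.ite_sum_zero, ← ite_and]
    rw [Finset.sum_comm]
    refine Finset.sum_congr rfl fun R₁ _ => ?_
    rw [Finset.sum_comm]
    refine Finset.sum_congr rfl fun z₁ _ => ?_
    rw [Finset.sum_comm]
    refine Finset.sum_congr rfl fun R₂ _ => ?_
    rw [Finset.sum_comm]
    refine Finset.sum_congr rfl fun z₂ _ => ?_
    rw [Finset.sum_eq_single_of_mem
      ((univ.filter (fun x : Xg => uA x ∈ R₁.1 ∧ vA x ∈ R₂.1),
        univ.filter (fun y : Yg => uB y ∈ R₁.2 ∧ vB y ∈ R₂.2))) (mem_univ _)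
      (by intro x _ hx; simp [Ne.symm hx])]
    exact if_congr (by simp [MemRect]; tauto) rfl rfl
  rw [E]
  simp only [coverSum_eq, Finset.sum_mul_sum, _root_.ite_sum_zero, ite_mul, mul_ite, mul_zero,
    zero_mul, ← ite_and]
  rw [Finset.sum_comm]
  refine Finset.sum_congr rfl fun z₁ _ => ?_
  refine ((Finset.sum_congr rfl fun R₁ _ => Finset.sum_comm).trans Finset.sum_comm).trans ?_
  refine Finset.sum_congr rfl fun z₂ _ => ?_
  refine Finset.sum_congr rfl fun R₁ _ => ?_
  refine Finset.sum_congr rfl fun R₂ _ => ?_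
  exact if_congr (by tauto) rfl rfl

lemma sq_feasible
    (Sf : Finset (Xf × Yf)) (Sg : Finset (Xg × Yg))
    (f : Xf × Yf → Zf) (g : Xg × Yg → Zg)
    (ε : ℝ) (hε : ε ∈ Set.Icc (0 : ℝ) 1)
    (uA vA : Xg → Xf) (uB vB : Yg → Yf) (c : Zf × Zf → Zg)
    (hred : ∀ p ∈ Sg, (uA p.1, uB p.2) ∈ Sf ∧ (vA p.1, vB p.2) ∈ Sf ∧
      c (f (uA p.1, uB p.2), f (vA p.1, vB p.2)) = g p)
    (w : Finset Xf × Finset Yf → Zf → ℝ)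
    (hw : RelaxedFeasible Sf f (ε / 2) w)
    (w'' : Finset Xg × Finset Yg → Zg → ℝ)
    (hw'' : ∀ (R'' : Finset Xg × Finset Yg) (z : Zg), w'' R'' z =
      ∑ R₁ : Finset Xf × Finset Yf, ∑ z₁ : Zf, ∑ R₂ : Finset Xf × Finset Yf, ∑ z₂ : Zf,
        if c (z₁, z₂) = z ∧
            (univ.filter (fun x : Xg => uA x ∈ R₁.1 ∧ vA x ∈ R₂.1),
             univ.filter (fun y : Yg => uB y ∈ R₁.2 ∧ vB y ∈ R₂.2)) = R''
        then w R₁ z₁ * w R₂ z₂ else 0) :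
    RelaxedFeasible Sg g ε w'' ∧ totalWeight w'' = (totalWeight w) ^ 2 := by
  obtain ⟨hw0, hwS, hwSc, hw1⟩ := hw
  obtain ⟨hε0, hε1⟩ := hε
  have hcs := coverSum_sq uA vA uB vB c w w'' hw''
  -- lower bound on single-instance total coverage
  have hlow : ∀ q : Xf × Yf, 1 - ε / 2 ≤ ∑ z, coverSum w q z := by
    intro q
    by_cases hq : q ∈ Sf
    · exact le_trans (hwS q hq)
        (Finset.single_le_sum (fun z _ => coverSum_nonneg hw0 q z) (mem_univ _))
    · exact hwSc q hq
  have hq0 : ∀ q : Xf × Yf, (0:ℝ) ≤ ∑ z, coverSum w q z :=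
    fun q => Finset.sum_nonneg fun z _ => coverSum_nonneg hw0 q z
  -- product formula for total coverage
  have hsum : ∀ p : Xg × Yg, ∑ z, coverSum w'' p z =
      (∑ z₁, coverSum w (uA p.1, uB p.2) z₁) * (∑ z₂, coverSum w (vA p.1, vB p.2) z₂) := by
    intro p
    simp only [hcs]
    rw [Finset.sum_comm]
    refine ((Finset.sum_congr rfl fun z₁ _ => Finset.sum_comm)).trans ?_
    rw [Finset.sum_mul_sum]
    refine Finset.sum_congr rfl fun z₁ _ => Finset.sum_congr rfl fun z₂ _ => ?_
    rw [Finset.sum_ite_eq univ (c (z₁, z₂)) (fun _ =>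
      coverSum w (uA p.1, uB p.2) z₁ * coverSum w (vA p.1, vB p.2) z₂)]
    simp
  have hw''0 : ∀ R z, 0 ≤ w'' R z := by
    intro R z
    rw [hw'']
    refine Finset.sum_nonneg fun R₁ _ => Finset.sum_nonneg fun z₁ _ =>
      Finset.sum_nonneg fun R₂ _ => Finset.sum_nonneg fun z₂ _ => ?_
    split_ifs with h
    · exact mul_nonneg (hw0 _ _) (hw0 _ _)
    · exact le_rfl
  refine ⟨⟨hw''0, ?_, ?_, ?_⟩, ?_⟩
  · -- valid inputs
    intro p hp
    obtain ⟨hu, hv, hc⟩ := hred p hp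
    set cu := coverSum w (uA p.1, uB p.2) (f (uA p.1, uB p.2)) with hcu
    set cv := coverSum w (vA p.1, vB p.2) (f (vA p.1, vB p.2)) with hcv
    have h1 : cu * cv ≤ coverSum w'' p (g p) := by
      rw [hcs p (g p)]
      have := Finset.single_le_sum (s := (univ : Finset (Zf × Zf)))
        (f := fun q : Zf × Zf => if c q = g p then
          coverSum w (uA p.1, uB p.2) q.1 * coverSum w (vA p.1, vB p.2) q.2 else 0)
        (fun q _ => by
          split_ifs with h
          · exact mul_nonneg (coverSum_nonneg hw0 _ _) (coverSum_nonneg hw0 _ _)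
          · exact le_rfl)
        (mem_univ (f (uA p.1, uB p.2), f (vA p.1, vB p.2)))
      rw [Fintype.sum_prod_type] at this
      simpa [hc] using this
    have ha := hwS _ hu
    have hb := hwS _ hv
    rw [← hcu] at ha
    rw [← hcv] at hb
    nlinarith [mul_nonneg (by linarith : (0:ℝ) ≤ cu - (1 - ε/2))
      (by linarith : (0:ℝ) ≤ cv - (1 - ε/2))]
  · -- invalid inputs
    intro p _
    rw [hsum p]
    have ha := hlow (uA p.1, uB p.2)
    have hb := hlow (vA p.1, vB p.2)
    nlinarith [mul_nonneg (by linarith : (0:ℝ) ≤ (∑ z, coverSum w (uA p.1, uB p.2) z) - (1 - ε/2))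
      (by linarith : (0:ℝ) ≤ (∑ z, coverSum w (vA p.1, vB p.2) z) - (1 - ε/2))]
  · -- upper bound
    intro p
    rw [hsum p]
    exact mul_le_one₀ (hw1 _) (hq0 _) (hw1 _)
  · -- total weight
    have hTz : ∀ z : Zg, ∑ R'' : Finset Xg × Finset Yg, w'' R'' z =
        ∑ R₁ : Finset Xf × Finset Yf, ∑ z₁ : Zf, ∑ R₂ : Finset Xf × Finset Yf, ∑ z₂ : Zf,
          if c (z₁, z₂) = z then w R₁ z₁ * w R₂ z₂ else 0 := by
      intro z
      simp only [hw'']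
      rw [Finset.sum_comm]
      refine Finset.sum_congr rfl fun R₁ _ => ?_
      rw [Finset.sum_comm]
      refine Finset.sum_congr rfl fun z₁ _ => ?_
      rw [Finset.sum_comm]
      refine Finset.sum_congr rfl fun R₂ _ => ?_
      rw [Finset.sum_comm]
      refine Finset.sum_congr rfl fun z₂ _ => ?_
      rw [Finset.sum_eq_single_of_mem
        ((univ.filter (fun x : Xg => uA x ∈ R₁.1 ∧ vA x ∈ R₂.1),
          univ.filter (fun y : Yg => uB y ∈ R₁.2 ∧ vB y ∈ R₂.2))) (mem_univ _)
        (by intro x _ hx; simp [Ne.symm hx])]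
      simp
    have expand : totalWeight w'' =
        ∑ R₁ : Finset Xf × Finset Yf, ∑ z₁ : Zf, ∑ R₂ : Finset Xf × Finset Yf, ∑ z₂ : Zf,
          w R₁ z₁ * w R₂ z₂ := by
      rw [totalWeight, Finset.sum_comm]
      simp only [hTz]
      rw [Finset.sum_comm]
      refine Finset.sum_congr rfl fun R₁ _ => ?_
      rw [Finset.sum_comm]
      refine Finset.sum_congr rfl fun z₁ _ => ?_
      rw [Finset.sum_comm]
      refine Finset.sum_congr rfl fun R₂ _ => ?_
      rw [Finset.sum_comm]
      refine Finset.sum_congr rfl fun z₂ _ => ?_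
      rw [Finset.sum_ite_eq univ (c (z₁, z₂)) (fun _ => w R₁ z₁ * w R₂ z₂)]
      simp
    rw [expand, totalWeight, sq, Finset.sum_mul_sum]
    refine Finset.sum_congr rfl fun R₁ _ => ?_
    rw [Finset.sum_comm]
    refine Finset.sum_congr rfl fun R₂ _ => ?_
    rw [Finset.sum_mul_sum]

end

/-- If `g` reduces to two instances of `f` (via input maps
`u_A, v_A, u_B, v_B` and output combiner `c`), then squaring an `(ε/2)`-feasible family
for `f` yields an `ε`-feasible family for `g` of squared objective value; consequently
`bprt_ε(g) ≤ (bprt_{ε/2}(f))²`. -/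
theorem statement_14 {Xf Yf Zf Xg Yg Zg : Type*}
    [Fintype Xf] [Fintype Yf] [Fintype Zf] [Fintype Xg] [Fintype Yg] [Fintype Zg]
    [DecidableEq Xf] [DecidableEq Yf] [DecidableEq Xg] [DecidableEq Yg] [DecidableEq Zg]
    (Sf : Finset (Xf × Yf)) (Sg : Finset (Xg × Yg))
    (f : Xf × Yf → Zf) (g : Xg × Yg → Zg)
    (ε : ℝ) (hε : ε ∈ Set.Icc (0 : ℝ) 1)
    (uA vA : Xg → Xf) (uB vB : Yg → Yf) (c : Zf × Zf → Zg)
    (hred : ∀ p ∈ Sg, (uA p.1, uB p.2) ∈ Sf ∧ (vA p.1, vB p.2) ∈ Sf ∧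
      c (f (uA p.1, uB p.2), f (vA p.1, vB p.2)) = g p)
    (w : Finset Xf × Finset Yf → Zf → ℝ)
    (hw : RelaxedFeasible Sf f (ε / 2) w)
    (w'' : Finset Xg × Finset Yg → Zg → ℝ)
    (hw'' : ∀ (R'' : Finset Xg × Finset Yg) (z : Zg), w'' R'' z =
      ∑ R₁ : Finset Xf × Finset Yf, ∑ z₁ : Zf, ∑ R₂ : Finset Xf × Finset Yf, ∑ z₂ : Zf,
        if c (z₁, z₂) = z ∧
            (univ.filter (fun x : Xg => uA x ∈ R₁.1 ∧ vA x ∈ R₂.1),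
             univ.filter (fun y : Yg => uB y ∈ R₁.2 ∧ vB y ∈ R₂.2)) = R''
        then w R₁ z₁ * w R₂ z₂ else 0) :
    RelaxedFeasible Sg g ε w'' ∧
    totalWeight w'' = (totalWeight w) ^ 2 ∧
    bprt Sg g ε ≤ (bprt Sf f (ε / 2)) ^ 2 := by
  have hsq := sq_feasible Sf Sg f g ε hε uA vA uB vB c hred w hw w'' hw''
  refine ⟨hsq.1, hsq.2, ?_⟩
  have hε2 : (0:ℝ) ≤ ε / 2 := by linarith [hε.1]
  unfold bprt
  set Vf : Set ℝ := {v | ∃ w0 : Finset Xf × Finset Yf → Zf → ℝ,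
    RelaxedFeasible Sf f (ε / 2) w0 ∧ v = totalWeight w0} with hVf
  set Vg : Set ℝ := {v | ∃ w0 : Finset Xg × Finset Yg → Zg → ℝ,
    RelaxedFeasible Sg g ε w0 ∧ v = totalWeight w0} with hVg
  have hVfne : Vf.Nonempty := by
    obtain ⟨w0, hw0⟩ := exists_feasible Sf f hε2
    exact ⟨totalWeight w0, w0, hw0, rfl⟩
  have hVgbdd : BddBelow Vg := by
    refine ⟨0, ?_⟩
    rintro v ⟨w0, hw0, rfl⟩
    exact totalWeight_nonneg hw0.1
  have hb0 : 0 ≤ sInf Vf := by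
    refine le_csInf hVfne ?_
    rintro v ⟨w0, hw0, rfl⟩
    exact totalWeight_nonneg hw0.1
  refine le_of_forall_pos_le_add fun δ hδ => ?_
  have hbpos : (0:ℝ) < 2 * sInf Vf + 1 := by linarith
  set t : ℝ := min 1 (δ / (2 * sInf Vf + 1)) with ht
  have ht0 : 0 < t := lt_min one_pos (div_pos hδ hbpos)
  obtain ⟨v, hvV, hvlt⟩ := Real.lt_sInf_add_pos hVfne ht0
  obtain ⟨wv, hwv, rfl⟩ := hvV
  have hfe := sq_feasible Sf Sg f g ε hε uA vA uB vB c hred wv hwv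
    (fun R'' z =>
      ∑ R₁ : Finset Xf × Finset Yf, ∑ z₁ : Zf, ∑ R₂ : Finset Xf × Finset Yf, ∑ z₂ : Zf,
        if c (z₁, z₂) = z ∧
            (univ.filter (fun x : Xg => uA x ∈ R₁.1 ∧ vA x ∈ R₂.1),
             univ.filter (fun y : Yg => uB y ∈ R₁.2 ∧ vB y ∈ R₂.2)) = R''
        then wv R₁ z₁ * wv R₂ z₂ else 0)
    (fun _ _ => rfl)
  have h1 : sInf Vg ≤ (totalWeight wv) ^ 2 := csInf_le hVgbdd ⟨_, hfe.1, hfe.2.symm⟩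
  have hv0 : 0 ≤ totalWeight wv := totalWeight_nonneg hwv.1
  have ht1 : t ≤ 1 := min_le_left _ _
  have ht2 : t * (2 * sInf Vf + 1) ≤ δ :=
    calc t * (2 * sInf Vf + 1) ≤ (δ / (2 * sInf Vf + 1)) * (2 * sInf Vf + 1) :=
          mul_le_mul_of_nonneg_right (min_le_right _ _) hbpos.le
      _ = δ := div_mul_cancel₀ _ (ne_of_gt hbpos)
  nlinarith [h1, hvlt, hv0, hb0, ht0.le, ht1, ht2,
    mul_le_mul_of_nonneg_left hvlt.le hv0,
    mul_le_mul_of_nonneg_right hvlt.le (by linarith : (0:ℝ) ≤ sInf Vf + t),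
    mul_le_mul_of_nonneg_left ht1 ht0.le]
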